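/- The trace transfer matrix of the inhomogeneous fundamental gl(M|N) chain is gl(M)⊕gl(N) invariant: for all 1 ≤ a, b ≤ n with [a] = [b] and all u ∈ ℂ, [Δ(E_{ab}), t(u)] = 0 in End(H). -/

import Mathlib

open scoped BigOperators

noncomputable section

namespace SuperSpin

/-- The ℤ₂-grading on `Fin n` (0-indexed): grade `0` for the first `M` indices,
grade `1` for the remaining ones.  `gr M i` is the grade of the (paper, 1-indexed)
index `i+1`. -/
def gr (M : ℕ) {n : ℕ} (i : Fin n) : ℕ := if (i : ℕ) < M then 0 else 1

/-- `End(V ⊗ V)` for `V = ℂⁿ`, as matrices indexed by pairs. -/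
abbrev E2 (n : ℕ) := Matrix (Fin n × Fin n) (Fin n × Fin n) ℂ

/-- The graded permutation operator `P (e_c ⊗ e_d) = (-1)^{[c][d]} e_d ⊗ e_c`. -/
def Pm (M n : ℕ) : E2 n :=
  Matrix.of fun p q =>
    if p.1 = q.2 ∧ p.2 = q.1 then ((-1 : ℂ) ^ (gr M q.1 * gr M q.2)) else 0

/-- The R-matrix `R(u) = u·id - hb·P`. -/
def Rm (M n : ℕ) (hb u : ℂ) : E2 n := u • (1 : E2 n) - hb • Pm M n

/-- The operator `Q (e_c ⊗ e_d) = δ_{cd} (-1)^{[d]} ∑_a e_a ⊗ e_a`. -/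
def Qm (M n : ℕ) : E2 n :=
  Matrix.of fun p q => if q.1 = q.2 ∧ p.1 = p.2 then ((-1 : ℂ) ^ (gr M q.2)) else 0

/-- Graded partial transposition in the second tensor factor. -/
def pt2 (M n : ℕ) (X : E2 n) : E2 n :=
  Matrix.of fun p q =>
    ((-1 : ℂ) ^ (gr M p.2 * gr M q.2 + gr M q.2)) * X (p.1, q.2) (q.1, p.2)

/-- Graded transposition of an `n × n` matrix: `(Aᵗ)_{ij} = (-1)^{[i][j]+[j]} A_{ji}`. -/
def gTr (M : ℕ) {n : ℕ} (A : Matrix (Fin n) (Fin n) ℂ) : Matrix (Fin n) (Fin n) ℂ :=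
  Matrix.of fun i j => ((-1 : ℂ) ^ (gr M i * gr M j + gr M j)) * A j i

/-- `A ⊗ id` acting on `V ⊗ V`. -/
def m1 {n : ℕ} (A : Matrix (Fin n) (Fin n) ℂ) : E2 n :=
  Matrix.of fun p q => A p.1 q.1 * (if p.2 = q.2 then 1 else 0)

/-- `id ⊗ A` acting on `V ⊗ V`. -/
def m2 {n : ℕ} (A : Matrix (Fin n) (Fin n) ℂ) : E2 n :=
  Matrix.of fun p q => (if p.1 = q.1 then 1 else 0) * A p.2 q.2

/-- `R₂₁(x) = P ∘ R(x) ∘ P`. -/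
def R21 (M n : ℕ) (hb u : ℂ) : E2 n := Pm M n * Rm M n hb u * Pm M n

/-- The graded reflection equation for a matrix-valued function `K`. -/
def GRE (M n : ℕ) (hb : ℂ) (K : ℂ → Matrix (Fin n) (Fin n) ℂ) : Prop :=
  ∀ u v : ℂ,
    Rm M n hb (u - v) * m1 (K u) * R21 M n hb (u + v) * m2 (K v)
      = m2 (K v) * Rm M n hb (u + v) * m1 (K u) * R21 M n hb (u - v)

/-- `End(V^{⊗m})`, with basis indexed by functions `Fin m → Fin n`. -/
abbrev Ten (n m : ℕ) := Matrix (Fin m → Fin n) (Fin m → Fin n) ℂ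

/-- The Koszul embedding of `X ∈ End(V ⊗ V)` acting on the factors `i < j` of
`V^{⊗ m}` (identity on the other factors, with the graded crossing signs produced
by conjugation with the adjacent graded permutation operators). -/
def kEmb (M n m : ℕ) (i j : Fin m) (X : E2 n) : Ten n m :=
  Matrix.of fun f g =>
    (if ∀ l, l ≠ i → l ≠ j → f l = g l then (1 : ℂ) else 0)
      * X (f i, f j) (g i, g j)
      * (-1 : ℂ) ^ ((gr M (f j) + gr M (g j)) *
          ∑ l ∈ Finset.univ.filter (fun l => i < l ∧ l < j), gr M (g l))

/-- The monodromy matrix `𝒯(u) = R_{1,2}(u-a₁) ⋯ R_{1,L+1}(u-a_L)` of the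
inhomogeneous fundamental chain, acting on `V ⊗ H = V^{⊗(L+1)}` (auxiliary space
in position `0`). -/
def Tmono (M n L : ℕ) (hb : ℂ) (a : Fin L → ℂ) (u : ℂ) : Ten n (L + 1) :=
  (List.ofFn fun k : Fin L => kEmb M n (L + 1) 0 k.succ (Rm M n hb (u - a k))).prod

/-- The block entry `X_{ab} ∈ End(H)` of an operator `X` on `V ⊗ H`. -/
def blk {n L : ℕ} (X : Ten n (L + 1)) (a b : Fin n) : Ten n L :=
  Matrix.of fun f g => X (Fin.cons a f) (Fin.cons b g)

/-- Supertrace transfer matrix `st(u) = ∑ (-1)^{[a]} 𝒯_{aa}(u)`. -/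
def stm (M n L : ℕ) (hb : ℂ) (a : Fin L → ℂ) (u : ℂ) : Ten n L :=
  ∑ i : Fin n, ((-1 : ℂ) ^ gr M i) • blk (Tmono M n L hb a u) i i

/-- Trace transfer matrix `t(u) = ∑ 𝒯_{aa}(u)`. -/
def tm (M n L : ℕ) (hb : ℂ) (a : Fin L → ℂ) (u : ℂ) : Ten n L :=
  ∑ i : Fin n, blk (Tmono M n L hb a u) i i

/-- The pseudovacuum `v⁺ = e₁ ⊗ ⋯ ⊗ e₁`. -/
def vplus (n L : ℕ) : (Fin L → Fin n) → ℂ :=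
  fun f => if ∀ l, (f l : ℕ) = 0 then 1 else 0

/-- The pseudovacuum weights `λ_j(w)` (paper index `j ≥ 1`):
`λ₁(w) = ∏ (w - a_m - hb)`, `λ_j(w) = ∏ (w - a_m)` for `j ≥ 2`. -/
def lamP (L : ℕ) (hb : ℂ) (a : Fin L → ℂ) (j : ℕ) (w : ℂ) : ℂ :=
  if j = 1 then ∏ m, (w - a m - hb) else ∏ m, (w - a m)

/-- `c_m = ∑_{l=1}^m (-1)^{[l]}` (so `c_0 = 0`). -/
def cP (M : ℕ) (m : ℕ) : ℂ := ∑ l ∈ Finset.range m, (if l < M then (1 : ℂ) else -1)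

/-- `λ'_k(w) = ∏_{m=1}^{k-1} λ_m(w + hb c_m) / ∏_{m=1}^{k} λ_m(w + hb c_{m-1})`
(paper index `k ≥ 1`). -/
def lamPr (M L : ℕ) (hb : ℂ) (a : Fin L → ℂ) (k : ℕ) (w : ℂ) : ℂ :=
  (∏ m ∈ Finset.Icc 1 (k - 1), lamP L hb a m (w + hb * cP M m)) /
    (∏ m ∈ Finset.Icc 1 k, lamP L hb a m (w + hb * cP M (m - 1)))

/-- The global generators `Δ(E_{ab}) = ∑_k E_{ab}^{(k)}` on `H = V^{⊗L}`. -/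
def Delta (M n L : ℕ) (a b : Fin n) : Ten n L :=
  ∑ k : Fin L, Matrix.of fun f g =>
    if f k = a ∧ g k = b ∧ ∀ l, l ≠ k → f l = g l then
      (-1 : ℂ) ^ ((gr M a + gr M b) *
        ∑ l ∈ Finset.univ.filter (fun l => l < k), gr M (g l))
    else 0

/-- The diagonal entry (at paper index `j`, `1 ≤ j ≤ n`) of the diagonal boundary
matrix with parameter `ξ` and blocks determined by `L₁ ≤ L₂`. -/
def kdval (ξ : ℂ) (L₁ L₂ : ℕ) (j : ℕ) (u : ℂ) : ℂ :=
  if L₁ < j ∧ j ≤ L₂ then u + ξ else ξ - u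

/-- The diagonal boundary matrix `K(u)`. -/
def Kdiag (n : ℕ) (ξ : ℂ) (L₁ L₂ : ℕ) (u : ℂ) : Matrix (Fin n) (Fin n) ℂ :=
  Matrix.diagonal fun j => kdval ξ L₁ L₂ ((j : ℕ) + 1) u

/-- An `n × n` matrix acting on the auxiliary (first) factor of `V^{⊗(L+1)}`. -/
def onAux {n L : ℕ} (A : Matrix (Fin n) (Fin n) ℂ) : Ten n (L + 1) :=
  Matrix.of fun f g => A (f 0) (g 0) * (if ∀ l, l ≠ 0 → f l = g l then 1 else 0)

/-- The double-row monodromy matrix `ℬ(u) = 𝒯(u) (K(u) ⊗ id_H) 𝒯(-u)⁻¹`. -/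
def Bmono (M n L : ℕ) (hb : ℂ) (a : Fin L → ℂ) (ξ : ℂ) (L₁ L₂ : ℕ) (u : ℂ) :
    Ten n (L + 1) :=
  Tmono M n L hb a u * onAux (Kdiag n ξ L₁ L₂ u) * (Tmono M n L hb a (-u))⁻¹

/-- The open-chain transfer matrix `b(u) = ∑ (-1)^{[a]} K⁺_{aa}(u) ℬ_{aa}(u)`. -/
def bop (M n L : ℕ) (hb : ℂ) (a : Fin L → ℂ) (ξ : ℂ) (L₁ L₂ : ℕ)
    (ξ' : ℂ) (L₁' L₂' : ℕ) (u : ℂ) : Ten n L :=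
  ∑ i : Fin n,
    (((-1 : ℂ) ^ gr M i) * Kdiag n ξ' L₁' L₂' u i i) •
      blk (Bmono M n L hb a ξ L₁ L₂ u) i i

/-- The functions `g_k(u)` of the open-chain pseudovacuum (paper index `k ≥ 1`). -/
def gP (M : ℕ) (hb ξ : ℂ) (L₁ L₂ : ℕ) (k : ℕ) (u : ℂ) : ℂ :=
  if k ≤ L₁ then ξ - u
  else if k ≤ L₂ then ξ + u - hb * cP M L₁
  else ξ - u - hb * (cP M L₁ - cP M L₂)

/-- The functions `a_k(u)` of the open-chain pseudovacuum (paper index `k ≥ 1`). -/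
def aP (M L : ℕ) (hb : ℂ) (a : Fin L → ℂ) (k : ℕ) (u : ℂ) : ℂ :=
  (if k ≤ M then (1 : ℂ) else -1) * hb *
    (2 * u * lamP L hb a k u * lamPr M L hb a k (-u)) /
    ((2 * u - hb * cP M k) * (2 * u - hb * cP M (k - 1)))

/-! ### Auxiliary machinery for Statement 9 -/

/-- Single-site generator `E_{ab}^{(k)}` (without Koszul signs). -/
def Ek (n m : ℕ) (a b : Fin n) (k : Fin m) : Ten n m :=
  Matrix.of fun f g =>
    if f k = a ∧ g k = b ∧ ∀ l, l ≠ k → f l = g l then (1 : ℂ) else 0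

lemma sign_one {M : ℕ} {n : ℕ} {a b : Fin n} (hab : gr M a = gr M b) (s : ℕ) :
    ((-1 : ℂ)) ^ ((gr M a + gr M b) * s) = 1 := by
  have : (gr M a + gr M b) * s = 2 * (gr M a * s) := by rw [hab]; ring
  rw [this, pow_mul]
  norm_num

lemma mulEk_left {n : ℕ} (m : ℕ) (a b : Fin n) (k : Fin m) (X : Ten n m)
    (f g : Fin m → Fin n) :
    (Ek n m a b k * X) f g = if f k = a then X (Function.update f k b) g else 0 := by
  rw [Matrix.mul_apply]
  by_cases hfa : f k = a
  · rw [Finset.sum_eq_single (Function.update f k b)]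
    · simp [Ek, hfa, Function.update_of_ne]
      intro x hx h
      exact absurd (Function.update_of_ne hx b f).symm h
    · intro h _ hne
      simp only [Ek, Matrix.of_apply]
      rw [if_neg, zero_mul]
      rintro ⟨-, h1, h2⟩
      apply hne
      funext l
      by_cases hlk : l = k
      · subst hlk; rw [Function.update_self, h1]
      · rw [Function.update_of_ne hlk, ← h2 l hlk]
    · intro h; exact absurd (Finset.mem_univ _) h
  · rw [if_neg hfa, Finset.sum_eq_zero]
    intro h _
    simp only [Ek, Matrix.of_apply]
    rw [if_neg, zero_mul]
    rintro ⟨h1, -, -⟩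
    exact hfa h1

lemma mulEk_right {n : ℕ} (m : ℕ) (a b : Fin n) (k : Fin m) (X : Ten n m)
    (f g : Fin m → Fin n) :
    (X * Ek n m a b k) f g = if g k = b then X f (Function.update g k a) else 0 := by
  rw [Matrix.mul_apply]
  by_cases hgb : g k = b
  · rw [Finset.sum_eq_single (Function.update g k a)]
    · simp [Ek, hgb, Function.update_of_ne]
      intro x hx h
      exact absurd (Function.update_of_ne hx a g) h
    · intro h _ hne
      simp only [Ek, Matrix.of_apply]
      rw [if_neg, mul_zero]
      rintro ⟨h1, -, h2⟩
      apply hne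
      funext l
      by_cases hlk : l = k
      · subst hlk; rw [Function.update_self, h1]
      · rw [Function.update_of_ne hlk, h2 l hlk]
    · intro h; exact absurd (Finset.mem_univ _) h
  · rw [if_neg hgb, Finset.sum_eq_zero]
    intro h _
    simp only [Ek, Matrix.of_apply]
    rw [if_neg, mul_zero]
    rintro ⟨-, h1, -⟩
    exact hgb h1

lemma Delta_eq {M n L : ℕ} {a b : Fin n} (hab : gr M a = gr M b) :
    Delta M n L a b = ∑ k : Fin L, Ek n L a b k := by
  unfold Delta
  refine Finset.sum_congr rfl fun k _ => ?_
  ext f g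
  simp only [Matrix.of_apply, Ek]
  split
  · exact sign_one hab _
  · rfl

lemma ite_zero_eq {C C' : Prop} [Decidable C] [Decidable C'] {v v' : ℂ}
    (h : C ↔ C') (hv : C → v = v') :
    (if C then v else 0) = (if C' then v' else 0) := by
  by_cases hc : C
  · rw [if_pos hc, if_pos (h.mp hc), hv hc]
  · rw [if_neg hc, if_neg (fun hc' => hc (h.mpr hc'))]

lemma ite_ite {P Q : Prop} [Decidable P] [Decidable Q] (v : ℂ) :
    (if P then (if Q then v else 0) else 0) = if P ∧ Q then v else 0 := by
  by_cases hp : P <;> by_cases hq : Q <;> simp [hp, hq]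

/-- Explicit entry formula for the Koszul-embedded graded permutation. -/
lemma K_apply {M n m : ℕ} (j : Fin (m + 1)) (f g : Fin (m + 1) → Fin n) :
    kEmb M n (m + 1) 0 j (Pm M n) f g =
      if (∀ l, l ≠ 0 → l ≠ j → f l = g l) ∧ f 0 = g j ∧ f j = g 0 then
        ((-1 : ℂ)) ^ (gr M (g 0) * gr M (g j) +
          (gr M (f j) + gr M (g j)) *
            ∑ l ∈ Finset.univ.filter (fun l => 0 < l ∧ l < j), gr M (g l))
      else 0 := by
  simp only [kEmb, Pm, Matrix.of_apply]
  by_cases h1 : ∀ l, l ≠ 0 → l ≠ j → f l = g l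
  · by_cases h2 : f 0 = g j ∧ f j = g 0
    · rw [if_pos h1, if_pos h2, if_pos ⟨h1, h2⟩, one_mul, ← pow_add]
    · rw [if_pos h1, if_neg h2, if_neg (fun h => h2 h.2), one_mul, zero_mul]
  · rw [if_neg h1, zero_mul, zero_mul, eq_comm, if_neg]
    rintro ⟨hA, -⟩
    exact h1 hA

lemma sum_gr_update {M n m : ℕ} (S : Finset (Fin m)) (g : Fin m → Fin n)
    (k : Fin m) (x : Fin n) (hx : gr M x = gr M (g k)) :
    ∑ l ∈ S, gr M (Function.update g k x l) = ∑ l ∈ S, gr M (g l) := by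
  refine Finset.sum_congr rfl fun l _ => ?_
  by_cases hlk : l = k
  · subst hlk; rw [Function.update_self, hx]
  · rw [Function.update_of_ne hlk]

lemma sum_gr_update_nmem {M n m : ℕ} {S : Finset (Fin m)} {k : Fin m}
    (hk : k ∉ S) (g : Fin m → Fin n) (x : Fin n) :
    ∑ l ∈ S, gr M (Function.update g k x l) = ∑ l ∈ S, gr M (g l) :=
  Finset.sum_congr rfl fun l hl =>
    congrArg _ (Function.update_of_ne (ne_of_mem_of_not_mem hl hk) _ _)

lemma kEmb_one {M n m : ℕ} (j : Fin (m + 1)) (hj : j ≠ 0) :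
    kEmb M n (m + 1) 0 j (1 : E2 n) = 1 := by
  ext f g
  simp only [kEmb, Matrix.of_apply, Matrix.one_apply, Prod.mk.injEq]
  by_cases hfg : f = g
  · subst hfg
    rw [if_pos (fun l _ _ => rfl), if_pos rfl, if_pos ⟨rfl, rfl⟩, one_mul, one_mul]
    have : (gr M (f j) + gr M (f j)) *
        ∑ l ∈ Finset.univ.filter (fun l => 0 < l ∧ l < j), gr M (f l)
        = 2 * (gr M (f j) *
          ∑ l ∈ Finset.univ.filter (fun l => 0 < l ∧ l < j), gr M (f l)) := by ring
    rw [this, pow_mul]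
    norm_num
  · rw [if_neg hfg]
    by_cases h1 : ∀ l, l ≠ 0 → l ≠ j → f l = g l
    · by_cases h2 : f 0 = g 0 ∧ f j = g j
      · exfalso
        apply hfg
        funext l
        by_cases hl0 : l = 0
        · subst hl0; exact h2.1
        · by_cases hlj : l = j
          · subst hlj; exact h2.2
          · exact h1 l hl0 hlj
      · rw [if_pos h1, if_neg h2, one_mul, zero_mul]
    · rw [if_neg h1, zero_mul, zero_mul]

lemma kEmb_Rm {M n m : ℕ} (i j : Fin m) (hb u : ℂ) :
    kEmb M n m i j (Rm M n hb u)
      = u • kEmb M n m i j (1 : E2 n) - hb • kEmb M n m i j (Pm M n) := by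
  ext f g
  simp only [kEmb, Rm, Matrix.sub_apply, Matrix.smul_apply, Matrix.of_apply,
    smul_eq_mul]
  ring

lemma comm_mid {M n m : ℕ} {a b : Fin n} (hab : gr M a = gr M b)
    (j k : Fin (m + 1)) (hk0 : k ≠ 0) (hkj : k ≠ j) :
    Ek n (m + 1) a b k * kEmb M n (m + 1) 0 j (Pm M n)
      = kEmb M n (m + 1) 0 j (Pm M n) * Ek n (m + 1) a b k := by
  ext f g
  rw [mulEk_left, mulEk_right, K_apply, K_apply,
    Function.update_of_ne (Ne.symm hk0) b f, Function.update_of_ne (Ne.symm hkj) b f,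
    Function.update_of_ne (Ne.symm hk0) a g, Function.update_of_ne (Ne.symm hkj) a g,
    ite_ite, ite_ite]
  refine ite_zero_eq ?_ ?_
  · constructor
    · rintro ⟨hfa, hcc, h2⟩
      have hgb : g k = b := by rw [← hcc k hk0 hkj, Function.update_self]
      refine ⟨hgb, ?_, h2⟩
      intro l h0 hj'
      by_cases hlk : l = k
      · subst hlk; rw [hfa, Function.update_self]
      · rw [Function.update_of_ne hlk]
        have := hcc l h0 hj'
        rwa [Function.update_of_ne hlk] at this
    · rintro ⟨hgb, hcc, h2⟩
      have hfa : f k = a := by rw [hcc k hk0 hkj, Function.update_self]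
      refine ⟨hfa, ?_, h2⟩
      intro l h0 hj'
      by_cases hlk : l = k
      · subst hlk; rw [Function.update_self, hgb]
      · rw [Function.update_of_ne hlk]
        have := hcc l h0 hj'
        rwa [Function.update_of_ne hlk] at this
  · rintro ⟨hfa, hcc, h2⟩
    have hgb : g k = b := by rw [← hcc k hk0 hkj, Function.update_self]
    rw [sum_gr_update _ g k a (by rw [hgb]; exact hab)]

lemma comm_zero {M n m : ℕ} {a b : Fin n} (hab : gr M a = gr M b)
    (j : Fin (m + 1)) (hj : j ≠ 0) :
    Ek n (m + 1) a b 0 * kEmb M n (m + 1) 0 j (Pm M n)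
      = kEmb M n (m + 1) 0 j (Pm M n) * Ek n (m + 1) a b j := by
  ext f g
  rw [mulEk_left, mulEk_right, K_apply, K_apply,
    Function.update_self (0 : Fin (m + 1)) b f, Function.update_of_ne hj b f,
    Function.update_self j a g, Function.update_of_ne (Ne.symm hj) a g,
    ite_ite, ite_ite]
  refine ite_zero_eq ?_ ?_
  · constructor
    · rintro ⟨hfa, hcc, hbg, h2⟩
      refine ⟨hbg.symm, ?_, hfa, h2⟩
      intro l h0 hj'
      rw [Function.update_of_ne hj']
      have := hcc l h0 hj'
      rwa [Function.update_of_ne h0] at this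
    · rintro ⟨hgb, hcc, hfa, h2⟩
      refine ⟨hfa, ?_, hgb.symm, h2⟩
      intro l h0 hj'
      rw [Function.update_of_ne h0]
      have := hcc l h0 hj'
      rwa [Function.update_of_ne hj'] at this
  · rintro ⟨hfa, hcc, hbg, h2⟩
    have hgr : gr M a = gr M (g j) := by rw [← hbg]; exact hab
    have hnm : j ∉ Finset.univ.filter (fun l => 0 < l ∧ l < j) := by simp
    rw [sum_gr_update_nmem hnm g a, ← hgr]

lemma comm_j {M n m : ℕ} {a b : Fin n} (hab : gr M a = gr M b)
    (j : Fin (m + 1)) (hj : j ≠ 0) :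
    Ek n (m + 1) a b j * kEmb M n (m + 1) 0 j (Pm M n)
      = kEmb M n (m + 1) 0 j (Pm M n) * Ek n (m + 1) a b 0 := by
  ext f g
  rw [mulEk_left, mulEk_right, K_apply, K_apply,
    Function.update_of_ne (Ne.symm hj) b f, Function.update_self j b f,
    Function.update_self (0 : Fin (m + 1)) a g, Function.update_of_ne hj a g,
    ite_ite, ite_ite]
  refine ite_zero_eq ?_ ?_
  · constructor
    · rintro ⟨hfa, hcc, h1, hbg⟩
      refine ⟨hbg.symm, ?_, h1, hfa⟩
      intro l h0 hj'
      rw [Function.update_of_ne h0]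
      have := hcc l h0 hj'
      rwa [Function.update_of_ne hj'] at this
    · rintro ⟨hgb, hcc, h1, hfa⟩
      refine ⟨hfa, ?_, h1, hgb.symm⟩
      intro l h0 hj'
      rw [Function.update_of_ne hj']
      have := hcc l h0 hj'
      rwa [Function.update_of_ne h0] at this
  · rintro ⟨hfa, hcc, h1, hbg⟩
    have hnm : (0 : Fin (m + 1)) ∉ Finset.univ.filter
        (fun l => 0 < l ∧ l < j) := by simp
    rw [sum_gr_update_nmem hnm g a, hfa, ← hbg, hab]

lemma comm_K {M n m : ℕ} {a b : Fin n} (hab : gr M a = gr M b)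
    (j : Fin (m + 1)) (hj : j ≠ 0) :
    (∑ k : Fin (m + 1), Ek n (m + 1) a b k) * kEmb M n (m + 1) 0 j (Pm M n)
      = kEmb M n (m + 1) 0 j (Pm M n) * ∑ k : Fin (m + 1), Ek n (m + 1) a b k := by
  rw [Finset.sum_mul, Finset.mul_sum]
  have key : ∀ k, Ek n (m + 1) a b k * kEmb M n (m + 1) 0 j (Pm M n)
      = kEmb M n (m + 1) 0 j (Pm M n) * Ek n (m + 1) a b (Equiv.swap 0 j k) := by
    intro k
    rcases eq_or_ne k 0 with rfl | hk0
    · rw [Equiv.swap_apply_left]; exact comm_zero hab j hj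
    rcases eq_or_ne k j with rfl | hkj
    · rw [Equiv.swap_apply_right]; exact comm_j hab k hj
    · rw [Equiv.swap_apply_of_ne_of_ne hk0 hkj]; exact comm_mid hab j k hk0 hkj
  calc ∑ k, Ek n (m + 1) a b k * kEmb M n (m + 1) 0 j (Pm M n)
      = ∑ k, kEmb M n (m + 1) 0 j (Pm M n) * Ek n (m + 1) a b (Equiv.swap 0 j k) :=
        Finset.sum_congr rfl fun k _ => key k
    _ = ∑ k, kEmb M n (m + 1) 0 j (Pm M n) * Ek n (m + 1) a b k :=
        Equiv.sum_comp (Equiv.swap 0 j)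
          (fun k => kEmb M n (m + 1) 0 j (Pm M n) * Ek n (m + 1) a b k)

lemma comm_R {M n m : ℕ} {a b : Fin n} (hab : gr M a = gr M b)
    (j : Fin (m + 1)) (hj : j ≠ 0) (hb u : ℂ) :
    (∑ k : Fin (m + 1), Ek n (m + 1) a b k) * kEmb M n (m + 1) 0 j (Rm M n hb u)
      = kEmb M n (m + 1) 0 j (Rm M n hb u)
        * ∑ k : Fin (m + 1), Ek n (m + 1) a b k := by
  rw [kEmb_Rm, mul_sub, sub_mul, mul_smul_comm, smul_mul_assoc, mul_smul_comm,
    smul_mul_assoc, kEmb_one j hj, mul_one, one_mul, comm_K hab j hj]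

lemma comm_T {M n L : ℕ} {a b : Fin n} (hab : gr M a = gr M b)
    (hb : ℂ) (sh : Fin L → ℂ) (u : ℂ) :
    (∑ k : Fin (L + 1), Ek n (L + 1) a b k) * Tmono M n L hb sh u
      = Tmono M n L hb sh u * ∑ k : Fin (L + 1), Ek n (L + 1) a b k := by
  unfold Tmono
  refine (Commute.list_prod_right _ _ fun x hx => ?_).eq
  obtain ⟨k, rfl⟩ := List.mem_ofFn.mp hx
  exact comm_R hab k.succ (Fin.succ_ne_zero k) hb (u - sh k)

lemma update_cons_succ {n L : ℕ} (c : Fin n) (f : Fin L → Fin n) (k : Fin L)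
    (b : Fin n) :
    Function.update (Fin.cons c f : Fin (L + 1) → Fin n) k.succ b
      = Fin.cons c (Function.update f k b) := by
  funext l
  refine Fin.cases ?_ (fun i => ?_) l
  · rw [Function.update_of_ne (Fin.succ_ne_zero k).symm, Fin.cons_zero, Fin.cons_zero]
  · by_cases hik : i = k
    · subst hik; rw [Function.update_self, Fin.cons_succ, Function.update_self]
    · rw [Function.update_of_ne (fun h => hik (Fin.succ_injective _ h)),
        Fin.cons_succ, Fin.cons_succ, Function.update_of_ne hik]

lemma update_cons_zero {n L : ℕ} (c : Fin n) (f : Fin L → Fin n) (b : Fin n) :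
    Function.update (Fin.cons c f : Fin (L + 1) → Fin n) 0 b = Fin.cons b f := by
  funext l
  refine Fin.cases ?_ (fun i => ?_) l
  · rw [Function.update_self, Fin.cons_zero]
  · rw [Function.update_of_ne (Fin.succ_ne_zero i), Fin.cons_succ, Fin.cons_succ]

lemma blk_Ek_succ_mul {n L : ℕ} (a b : Fin n) (k : Fin L) (X : Ten n (L + 1))
    (c d : Fin n) :
    blk (Ek n (L + 1) a b k.succ * X) c d = Ek n L a b k * blk X c d := by
  ext f g
  simp only [blk, Matrix.of_apply]
  rw [mulEk_left, mulEk_left, Fin.cons_succ]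
  by_cases hfa : f k = a
  · rw [if_pos hfa, if_pos hfa, update_cons_succ]
    rfl
  · rw [if_neg hfa, if_neg hfa]

lemma blk_mul_Ek_succ {n L : ℕ} (a b : Fin n) (k : Fin L) (X : Ten n (L + 1))
    (c d : Fin n) :
    blk (X * Ek n (L + 1) a b k.succ) c d = blk X c d * Ek n L a b k := by
  ext f g
  simp only [blk, Matrix.of_apply]
  rw [mulEk_right, mulEk_right, Fin.cons_succ]
  by_cases hgb : g k = b
  · rw [if_pos hgb, if_pos hgb, update_cons_succ]
    rfl
  · rw [if_neg hgb, if_neg hgb]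

lemma sum_blk_E0_mul {n L : ℕ} (a b : Fin n) (X : Ten n (L + 1)) :
    ∑ c : Fin n, blk (Ek n (L + 1) a b 0 * X) c c = blk X b a := by
  ext f g
  rw [Matrix.sum_apply]
  have h : ∀ c : Fin n, blk (Ek n (L + 1) a b 0 * X) c c f g
      = if c = a then X (Fin.cons b f) (Fin.cons c g) else 0 := by
    intro c
    simp only [blk, Matrix.of_apply]
    rw [mulEk_left, Fin.cons_zero]
    by_cases hca : c = a
    · rw [if_pos hca, if_pos hca, update_cons_zero]
    · rw [if_neg hca, if_neg hca]
  rw [Finset.sum_congr rfl fun c _ => h c, Finset.sum_ite_eq' Finset.univ a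
    (fun c => X (Fin.cons b f) (Fin.cons c g))]
  simp [blk]

lemma sum_blk_mul_E0 {n L : ℕ} (a b : Fin n) (X : Ten n (L + 1)) :
    ∑ c : Fin n, blk (X * Ek n (L + 1) a b 0) c c = blk X b a := by
  ext f g
  rw [Matrix.sum_apply]
  have h : ∀ c : Fin n, blk (X * Ek n (L + 1) a b 0) c c f g
      = if c = b then X (Fin.cons c f) (Fin.cons a g) else 0 := by
    intro c
    simp only [blk, Matrix.of_apply]
    rw [mulEk_right, Fin.cons_zero]
    by_cases hcb : c = b
    · rw [if_pos hcb, if_pos hcb, update_cons_zero]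
    · rw [if_neg hcb, if_neg hcb]
  rw [Finset.sum_congr rfl fun c _ => h c, Finset.sum_ite_eq' Finset.univ b
    (fun c => X (Fin.cons c f) (Fin.cons a g))]
  simp [blk]

lemma blk_sum {n L : ℕ} {ι : Type*} (s : Finset ι) (Y : ι → Ten n (L + 1))
    (c d : Fin n) : blk (∑ k ∈ s, Y k) c d = ∑ k ∈ s, blk (Y k) c d := by
  ext f g
  simp [blk, Matrix.sum_apply]

lemma blk_add {n L : ℕ} (X Y : Ten n (L + 1)) (c d : Fin n) :
    blk (X + Y) c d = blk X c d + blk Y c d := by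
  ext f g; simp [blk]

lemma blk_sub {n L : ℕ} (X Y : Ten n (L + 1)) (c d : Fin n) :
    blk (X - Y) c d = blk X c d - blk Y c d := by
  ext f g; simp [blk]
lemma assemble {n L : ℕ} (a b : Fin n) (T : Ten n (L + 1))
    (hT : (∑ k : Fin (L + 1), Ek n (L + 1) a b k) * T
      = T * ∑ k : Fin (L + 1), Ek n (L + 1) a b k) :
    (∑ k : Fin L, Ek n L a b k) * (∑ c : Fin n, blk T c c)
      = (∑ c : Fin n, blk T c c) * ∑ k : Fin L, Ek n L a b k := by
  rw [Fin.sum_univ_succ] at hT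
  set S := ∑ k : Fin L, Ek n (L + 1) a b (Fin.succ k) with hS
  set E0 := Ek n (L + 1) a b 0 with hE0
  have h2 : S * T = T * S + (T * E0 - E0 * T) := by
    have h3 : E0 * T + S * T = T * E0 + T * S := by
      rw [← add_mul, ← mul_add]; exact hT
    have h4 := eq_sub_of_add_eq' h3
    rw [h4]; abel
  have hL1 : ∀ c : Fin n,
      (∑ k : Fin L, Ek n L a b k) * blk T c c = blk (S * T) c c := by
    intro c
    rw [Finset.sum_mul, hS, Finset.sum_mul, blk_sum]
    exact Finset.sum_congr rfl fun k _ => (blk_Ek_succ_mul a b k T c c).symm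
  have hR1 : ∀ c : Fin n,
      blk T c c * (∑ k : Fin L, Ek n L a b k) = blk (T * S) c c := by
    intro c
    rw [Finset.mul_sum, hS, Finset.mul_sum, blk_sum]
    exact Finset.sum_congr rfl fun k _ => (blk_mul_Ek_succ a b k T c c).symm
  rw [Finset.mul_sum, Finset.sum_mul]
  calc ∑ c : Fin n, (∑ k : Fin L, Ek n L a b k) * blk T c c
      = ∑ c : Fin n, blk (S * T) c c := Finset.sum_congr rfl fun c _ => hL1 c
    _ = ∑ c : Fin n, (blk (T * S) c c + (blk (T * E0) c c - blk (E0 * T) c c)) := by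
        refine Finset.sum_congr rfl fun c _ => ?_
        rw [h2, blk_add, blk_sub]
    _ = ∑ c : Fin n, blk (T * S) c c
        + ((∑ c : Fin n, blk (T * E0) c c) - ∑ c : Fin n, blk (E0 * T) c c) := by
        rw [Finset.sum_add_distrib, Finset.sum_sub_distrib]
    _ = ∑ c : Fin n, blk (T * S) c c := by
        rw [hE0, sum_blk_mul_E0, sum_blk_E0_mul, sub_self, add_zero]
    _ = ∑ c : Fin n, blk T c c * ∑ k : Fin L, Ek n L a b k :=
        Finset.sum_congr rfl fun c _ => (hR1 c).symm

/-- The trace transfer matrix is `gl(M) ⊕ gl(N)` invariant: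
`[Δ(E_{ab}), t(u)] = 0` whenever `[a] = [b]`. -/
theorem statement9 (M N : ℕ) (hM : 1 ≤ M) (hN : 1 ≤ N) (hb : ℂ) (hhb : hb ≠ 0)
    (L : ℕ) (hL : 1 ≤ L) (sh : Fin L → ℂ) :
    ∀ a b : Fin (M + N), gr M a = gr M b → ∀ u : ℂ,
      Delta M (M + N) L a b * tm M (M + N) L hb sh u
        = tm M (M + N) L hb sh u * Delta M (M + N) L a b := by
  intro a b hab u
  rw [Delta_eq hab]
  unfold tm
  exact assemble a b (Tmono M (M + N) L hb sh u) (comm_T hab hb sh u)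

end SuperSpin
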